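/- Let F be an algebraically closed field and consider the adjoint action of SL₂(F) on its Lie algebra sl₂(F). Then sl₂(F) = [sl₂(F), SL₂(F)], i.e., sl₂(F) is spanned by elements of the form g·x·g⁻¹ − x with g ∈ SL₂(F), x ∈ sl₂(F). -/

import Mathlib

open Matrix

/-- Over an algebraically closed field `F`, the Lie algebra `sl₂(F)` of trace-zero
`2 × 2` matrices is spanned by the elements `g·x·g⁻¹ − x` with `g ∈ SL₂(F)` and
`x ∈ sl₂(F)`. -/
theorem sl2_eq_span_commutators {F : Type*} [Field F] [IsAlgClosed F] :
    Submodule.span F {y : Matrix (Fin 2) (Fin 2) F |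
        ∃ (g : Matrix.SpecialLinearGroup (Fin 2) F) (x : Matrix (Fin 2) (Fin 2) F),
          Matrix.trace x = 0 ∧
            y = (g : Matrix (Fin 2) (Fin 2) F) * x *
                ((g⁻¹ : Matrix.SpecialLinearGroup (Fin 2) F) : Matrix (Fin 2) (Fin 2) F) - x}
      = LinearMap.ker (Matrix.traceLinearMap (Fin 2) F F) := by
  set S := {y : Matrix (Fin 2) (Fin 2) F |
        ∃ (g : Matrix.SpecialLinearGroup (Fin 2) F) (x : Matrix (Fin 2) (Fin 2) F),
          Matrix.trace x = 0 ∧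
            y = (g : Matrix (Fin 2) (Fin 2) F) * x *
                ((g⁻¹ : Matrix.SpecialLinearGroup (Fin 2) F) : Matrix (Fin 2) (Fin 2) F) - x}
    with hS
  apply le_antisymm
  · rw [Submodule.span_le]
    rintro y ⟨g, x, hx, rfl⟩
    have hinv : ((g⁻¹ : Matrix.SpecialLinearGroup (Fin 2) F) : Matrix (Fin 2) (Fin 2) F) *
        (g : Matrix (Fin 2) (Fin 2) F) = 1 := by
      rw [← Matrix.SpecialLinearGroup.coe_mul, inv_mul_cancel]; rfl
    simp only [SetLike.mem_coe, LinearMap.mem_ker, Matrix.traceLinearMap_apply]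
    rw [Matrix.trace_sub, Matrix.trace_mul_comm, ← Matrix.mul_assoc, hinv, Matrix.one_mul, hx,
      sub_zero]
  · -- basis matrices
    set E : Matrix (Fin 2) (Fin 2) F := !![0,1;0,0] with hE
    set Fm : Matrix (Fin 2) (Fin 2) F := !![0,0;1,0] with hFm
    set H : Matrix (Fin 2) (Fin 2) F := !![1,0;0,-1] with hH
    have mem1 : ∀ t : F, t • H - t^2 • E ∈ S := by
      intro t
      refine ⟨⟨!![1,t;0,1], by simp [Matrix.det_fin_two_of]⟩, Fm, by simp [hFm, Matrix.trace_fin_two], ?_⟩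
      show t • H - t^2 • E = !![1,t;0,1] * Fm * (!![1,t;0,1]).adjugate - Fm
      rw [Matrix.adjugate_fin_two_of, hFm, hH, hE]
      ext i j
      fin_cases i <;> fin_cases j <;>
        simp [Matrix.mul_apply, Fin.sum_univ_two] <;> ring
    have mem2 : ∀ t : F, (-t) • H - t^2 • Fm ∈ S := by
      intro t
      refine ⟨⟨!![1,0;t,1], by simp [Matrix.det_fin_two_of]⟩, E, by simp [hE, Matrix.trace_fin_two], ?_⟩
      show (-t) • H - t^2 • Fm = !![1,0;t,1] * E * (!![1,0;t,1]).adjugate - E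
      rw [Matrix.adjugate_fin_two_of, hFm, hH, hE]
      ext i j
      fin_cases i <;> fin_cases j <;>
        simp [Matrix.mul_apply, Fin.sum_univ_two] <;> ring
    letI := Classical.decEq F
    obtain ⟨a, ha⟩ := Infinite.exists_notMem_finset ({0, 1} : Finset F)
    simp only [Finset.mem_insert, Finset.mem_singleton, not_or] at ha
    obtain ⟨ha0, ha1⟩ := ha
    have hne : a^2 - a ≠ 0 := by
      intro h
      have : a * (a - 1) = 0 := by linear_combination h
      rcases mul_eq_zero.mp this with h' | h'
      · exact ha0 h'
      · exact ha1 (by linear_combination h')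
    -- E, H, Fm are in the span
    have hE_mem : E ∈ Submodule.span F S := by
      have h1 : (1:F) • H - (1:F)^2 • E ∈ Submodule.span F S := Submodule.subset_span (mem1 1)
      have h2 : a • H - a^2 • E ∈ Submodule.span F S := Submodule.subset_span (mem1 a)
      have : E = (a^2 - a)⁻¹ • (a • ((1:F) • H - (1:F)^2 • E) - (a • H - a^2 • E)) := by
        match_scalars <;> field_simp <;> try ring
      rw [this]
      refine Submodule.smul_mem _ _ (Submodule.sub_mem _ (Submodule.smul_mem _ _ ?_) ?_) <;>
        exact Submodule.subset_span (mem1 _)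
    have hH_mem : H ∈ Submodule.span F S := by
      have h1 : (1:F) • H - (1:F)^2 • E ∈ Submodule.span F S := Submodule.subset_span (mem1 1)
      have : H = ((1:F) • H - (1:F)^2 • E) + E := by module
      rw [this]
      exact Submodule.add_mem _ (Submodule.subset_span (mem1 1)) hE_mem
    have hF_mem : Fm ∈ Submodule.span F S := by
      have h1 : (-(1:F)) • H - (1:F)^2 • Fm ∈ Submodule.span F S := Submodule.subset_span (mem2 1)
      have : Fm = -(((-1:F)) • H - (1:F)^2 • Fm) - H := by module
      rw [this]
      exact Submodule.sub_mem _ (Submodule.neg_mem _ (Submodule.subset_span (mem2 1))) hH_mem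
    intro x hx
    simp only [LinearMap.mem_ker, Matrix.traceLinearMap_apply, Matrix.trace_fin_two] at hx
    have hxdecomp : x = x 0 0 • H + x 0 1 • E + x 1 0 • Fm := by
      ext i j
      fin_cases i <;> fin_cases j <;>
        simp [hH, hE, hFm]
      · linear_combination hx
    rw [hxdecomp]
    exact Submodule.add_mem _ (Submodule.add_mem _ (Submodule.smul_mem _ _ hH_mem)
      (Submodule.smul_mem _ _ hE_mem)) (Submodule.smul_mem _ _ hF_mem)
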